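/- Let I be a monomial ideal minimally generated by x^{a₁},…,x^{a_r}, with irredundant irreducible decomposition I = ∩ᵢ₌₁ˢ 𝔪^{dᵢ}. Then for any b ∈ ℕⁿ, the sliding I^{◁b} := (x^{a₁◁b},…,x^{a_r◁b}) has irredundant irreducible decomposition I^{◁b} = ∩ᵢ₌₁ˢ 𝔪^{dᵢ◁b}. -/

import Mathlib

open MvPolynomial

/-- The polynomial ring `S = k[x₁,…,xₙ]`. -/
abbrev PS (k : Type) [Field k] (n : ℕ) : Type := MvPolynomial (Fin n) k

/-- The `i`-th unit vector in `ℤⁿ`. -/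
def eZ (n : ℕ) (i : Fin n) : Fin n → ℤ := fun j => if j = i then 1 else 0

/-- Inclusion `ℕⁿ → ℤⁿ`. -/
def natDeg {n : ℕ} (d : Fin n → ℕ) : Fin n → ℤ := fun i => (d i : ℤ)

/-- Function `Fin n → ℕ` as a finitely supported function (exponent of a monomial). -/
noncomputable def toFs {n : ℕ} (d : Fin n → ℕ) : Fin n →₀ ℕ := Finsupp.equivFunOnFinite.symm d

/-- A `ℤⁿ`-grading of an `S`-module `M`: a direct sum decomposition of `M` into
`k`-subspaces compatible with multiplication by the variables. -/
structure MGrading (k : Type) [Field k] (n : ℕ) (M : Type) [AddCommGroup M]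
    [Module (PS k n) M] [Module k M] [IsScalarTower k (PS k n) M] where
  piece : (Fin n → ℤ) → Submodule k M
  indep : iSupIndep piece
  total : ⨆ d, piece d = ⊤
  smul_mem : ∀ (i : Fin n) (d : Fin n → ℤ) (m : M),
    m ∈ piece d → (X i : PS k n) • m ∈ piece (d + eZ n i)

section Core

variable {k : Type} [Field k] {n : ℕ} {M : Type} [AddCommGroup M]
  [Module (PS k n) M] [Module k M] [IsScalarTower k (PS k n) M]

/-- The `k`-subspace `m·k[Z]` spanned by the multiples of `m` by monomials in the
variables of `Z`. -/
def stanleySub (m : M) (Z : Finset (Fin n)) : Submodule k M :=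
  Submodule.span k
    {y | ∃ b : Fin n →₀ ℕ, (∀ j ∈ b.support, j ∈ Z) ∧ y = (monomial b (1 : k) : PS k n) • m}

/-- A Stanley decomposition of a `ℤⁿ`-graded module `M`: finitely many homogeneous
elements `mᵢ` and sets of variables `Zᵢ` such that each `mᵢ k[Zᵢ]` is a free Stanley
space and `M` is their direct sum as (`ℤⁿ`-graded) `k`-vector spaces. -/
structure StanleyDecomp (gr : MGrading k n M) where
  s : ℕ
  elem : Fin s → M
  deg : Fin s → (Fin n → ℤ)
  Z : Fin s → Finset (Fin n)
  homog : ∀ i, elem i ∈ gr.piece (deg i)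
  free : ∀ i, LinearIndependent k
    (fun b : {b : Fin n →₀ ℕ // ∀ j ∈ b.support, j ∈ Z i} =>
      ((monomial (b : Fin n →₀ ℕ) (1 : k) : PS k n) • elem i : M))
  indep : iSupIndep (fun i => (stanleySub (elem i) (Z i) : Submodule k M))
  total : (⨆ i, (stanleySub (elem i) (Z i) : Submodule k M)) = ⊤

/-- The Stanley depth of a `ℤⁿ`-graded module: the largest `d` such that there is a
Stanley decomposition all of whose Stanley spaces have at least `d` free variables. -/
noncomputable def sdepth (gr : MGrading k n M) : ℕ :=
  sSup {d | ∃ D : StanleyDecomp gr, ∀ i, d ≤ (D.Z i).card}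

/-- A grading is positively `a`-determined: concentrated in `ℕⁿ`, and multiplication
by `xᵢ : M_d → M_{d+eᵢ}` is bijective whenever `d i ≥ a i`. -/
structure IsPosDet (a : Fin n → ℕ) (gr : MGrading k n M) : Prop where
  nonneg : ∀ d : Fin n → ℤ, (∃ i, d i < 0) → gr.piece d = ⊥
  inj : ∀ (d : Fin n → ℕ) (i : Fin n), a i ≤ d i → ∀ m ∈ gr.piece (natDeg d),
    ∀ m' ∈ gr.piece (natDeg d),
      (X i : PS k n) • m = (X i : PS k n) • m' → m = m'
  surj : ∀ (d : Fin n → ℕ) (i : Fin n), a i ≤ d i →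
    ∀ m' ∈ gr.piece (natDeg d + eZ n i),
      ∃ m ∈ gr.piece (natDeg d), (X i : PS k n) • m = m'

/-- A Stanley decomposition is positively `a`-determined: all degrees `deg i` lie in
`[0,a]` and `{x_j : a j ≤ (deg i) j} ⊆ Z i`. -/
def StanleyDecomp.IsPosDetDecomp {gr : MGrading k n M} (a : Fin n → ℕ)
    (D : StanleyDecomp gr) : Prop :=
  ∀ i, ∃ d : Fin n → ℕ, D.deg i = natDeg d ∧ (∀ j, d j ≤ a j) ∧
    (∀ j, a j ≤ d j → j ∈ D.Z i)

/-- `#{j : a j ≤ b j}`, the cardinality of `suppᵃ(b)`. -/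
def suppCardA {n : ℕ} (a b : Fin n → ℕ) : ℕ :=
  (Finset.univ.filter (fun j => a j ≤ b j)).card

/-- `#supp(c) = #{j : c j ≥ 1}`. -/
def suppCard {n : ℕ} (c : Fin n → ℕ) : ℕ :=
  (Finset.univ.filter (fun j => 1 ≤ c j)).card

/-- `#supp(b)` for `b ∈ ℤⁿ`. -/
def suppCardZ {n : ℕ} (b : Fin n → ℤ) : ℕ :=
  (Finset.univ.filter (fun j => 1 ≤ b j)).card

/-- The set `[[c,b]]ₐ` of degrees where the interval module `kₐ[c,b]` is nonzero. -/
def intervalSet {n : ℕ} (a c b : Fin n → ℕ) : Set (Fin n → ℕ) :=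
  {d | (∀ i, c i ≤ d i) ∧ ∀ i, b i < a i → d i ≤ b i}

/-- A positively `a`-determined quasi Stanley decomposition of an (`ℕⁿ`-graded)
module `M`, encoded by the images `f i d` of the monomial basis elements `x̄^d` of the
interval modules `kₐ[cᵢ,bᵢ]` under a graded `k`-linear bijection
`⊕ᵢ kₐ[cᵢ,bᵢ] → M` satisfying `f(x̄^d) = x^{d-cᵢ}·f(x̄^{cᵢ})`. -/
structure QSDecomp (a : Fin n → ℕ) (gr : MGrading k n M) where
  s : ℕ
  c : Fin s → (Fin n → ℕ)
  b : Fin s → (Fin n → ℕ)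
  cb : ∀ i j, c i j ≤ b i j
  ba : ∀ i j, b i j ≤ a j
  f : Fin s → (Fin n → ℕ) → M
  compat : ∀ i d, d ∈ intervalSet a (c i) (b i) →
    f i d = (monomial (toFs (fun j => d j - c i j)) (1 : k) : PS k n) • f i (c i)
  mem : ∀ i d, d ∈ intervalSet a (c i) (b i) → f i d ∈ gr.piece (natDeg d)
  li : ∀ d : Fin n → ℕ, LinearIndependent k
    (fun i : {i : Fin s // d ∈ intervalSet a (c i) (b i)} => (f (i : Fin s) d : M))
  span : ∀ d : Fin n → ℕ, gr.piece (natDeg d) =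
    Submodule.span k {y | ∃ i : Fin s, d ∈ intervalSet a (c i) (b i) ∧ y = f i d}

/-- `shreg` computed via positively `a`-determined quasi Stanley decompositions. -/
noncomputable def shregA (a : Fin n → ℕ) (gr : MGrading k n M) : ℕ :=
  sInf {r | ∃ D : QSDecomp a gr, ∀ i, suppCard (D.c i) ≤ r}

/-- `shreg(M)`: minimum over all quasi Stanley decompositions (for all `a`) of the
maximal support-cardinality of the bottom degrees `cᵢ`. -/
noncomputable def shreg (gr : MGrading k n M) : ℕ :=
  sInf {r | ∃ a : Fin n → ℕ, ∃ D : QSDecomp a gr, ∀ i, suppCard (D.c i) ≤ r}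

end Core

/-- Depth of an `S`-module with respect to the ideal `(x₁,…,xₙ)`: the supremum of
lengths of regular sequences consisting of elements of `(x₁,…,xₙ)`. -/
noncomputable def mdepth (k : Type) [Field k] (n : ℕ) (M : Type) [AddCommGroup M]
    [Module (PS k n) M] : ℕ :=
  sSup {d | ∃ rs : List (PS k n), rs.length = d ∧
    (∀ r ∈ rs, r ∈ Ideal.span (Set.range (X : Fin n → PS k n))) ∧
    RingTheory.Sequence.IsRegular M rs}

/-- Krull dimension of an `S`-module, i.e. the Krull dimension of `S/ann(M)`. -/
noncomputable def mdim (k : Type) [Field k] (n : ℕ) (M : Type) [AddCommGroup M]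
    [Module (PS k n) M] : WithBot (WithTop ℕ) :=
  ringKrullDim (PS k n ⧸ Module.annihilator (PS k n) M)

/-- An `S`-module is Cohen–Macaulay if its depth equals its Krull dimension. -/
def IsCMmod (k : Type) [Field k] (n : ℕ) (M : Type) [AddCommGroup M]
    [Module (PS k n) M] : Prop :=
  (mdepth k n M : WithBot (WithTop ℕ)) = mdim k n M

/-- The defining ideal of the interval module `kₐ[c,b]`:
generated by `xᵢ^{bᵢ-cᵢ+1}` for the `i` with `bᵢ < aᵢ`. -/
noncomputable def intervalIdeal (k : Type) [Field k] {n : ℕ} (a c b : Fin n → ℕ) : Ideal (PS k n) :=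
  Ideal.span {p | ∃ i, b i < a i ∧ p = (X i : PS k n) ^ (b i - c i + 1)}

/-- The interval module `kₐ[c,b] = x^c · S/(xᵢ^{bᵢ+1} : bᵢ < aᵢ)`, realized (up to the
degree shift by `c`, which is recorded in the grading `intervalPiece`) as the quotient
`S/(xᵢ^{bᵢ-cᵢ+1} : bᵢ < aᵢ)`. -/
abbrev IntervalMod (k : Type) [Field k] {n : ℕ} (a c b : Fin n → ℕ) : Type :=
  PS k n ⧸ intervalIdeal k a c b

/-- The graded piece of `kₐ[c,b]` in degree `d`: spanned by (the image of) the
monomial `x^{d-c}` when `d ⪰ c`, and `0` otherwise. -/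
noncomputable def intervalPiece (k : Type) [Field k] {n : ℕ} (a c b : Fin n → ℕ)
    (d : Fin n → ℤ) : Submodule k (IntervalMod k a c b) :=
  Submodule.span k {y | ∃ e : Fin n →₀ ℕ, (∀ i, d i = c i + e i) ∧
    y = Ideal.Quotient.mk (intervalIdeal k a c b) (monomial e (1 : k))}

/-- `d - eᵢ` in `ℕⁿ`. -/
def subE {n : ℕ} (d : Fin n → ℕ) (i : Fin n) : Fin n → ℕ :=
  fun j => if j = i then d j - 1 else d j

/-- `N` is (isomorphic to) the Alexander dual `𝒜ₐ(M)` of `M`:  there is a family of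
perfect `k`-bilinear pairings `N_d × M_{a-d} → k` (for `d ∈ [0,a]`) intertwining
multiplication by `xᵢ` on the two sides. -/
structure IsAlexDual {k : Type} [Field k] {n : ℕ} {M N : Type}
    [AddCommGroup M] [Module (PS k n) M] [Module k M] [IsScalarTower k (PS k n) M]
    [AddCommGroup N] [Module (PS k n) N] [Module k N] [IsScalarTower k (PS k n) N]
    (a : Fin n → ℕ) (grM : MGrading k n M) (grN : MGrading k n N) : Prop where
  exists_pairing : ∃ B : (Fin n → ℕ) → N → M → k,
    (∀ d y y' m, B d (y + y') m = B d y m + B d y' m) ∧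
    (∀ d (r : k) y m, B d (r • y) m = r * B d y m) ∧
    (∀ d y m m', B d y (m + m') = B d y m + B d y m') ∧
    (∀ d (r : k) y m, B d y (r • m) = r * B d y m) ∧
    (∀ d : Fin n → ℕ, (∀ j, d j ≤ a j) →
      (∀ y ∈ grN.piece (natDeg d),
        (∀ m ∈ grM.piece (natDeg (fun j => a j - d j)), B d y m = 0) → y = 0) ∧
      (∀ m ∈ grM.piece (natDeg (fun j => a j - d j)),
        (∀ y ∈ grN.piece (natDeg d), B d y m = 0) → m = 0)) ∧
    (∀ (d : Fin n → ℕ) (i : Fin n), (∀ j, d j ≤ a j) → 1 ≤ d i →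
      ∀ y ∈ grN.piece (natDeg (subE d i)),
        ∀ m ∈ grM.piece (natDeg (fun j => a j - d j)),
          B d ((X i : PS k n) • y) m = B (subE d i) y ((X i : PS k n) • m))

section Skel

variable {k : Type} [Field k] {n : ℕ} {M : Type} [AddCommGroup M]
  [Module (PS k n) M] [Module k M] [IsScalarTower k (PS k n) M]

/-- `M^{≥l}` (i.e. `M^{>l-1}`): the `S`-submodule of `M` generated by all graded
components `M_d` with `#suppᵃ(d) ≥ l`. -/
noncomputable def skelSubGe (a : Fin n → ℕ) (gr : MGrading k n M) (l : ℕ) : Submodule (PS k n) M :=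
  Submodule.span (PS k n)
    {m : M | ∃ d : Fin n → ℕ, l ≤ suppCardA a d ∧ m ∈ gr.piece (natDeg d)}

/-- `M^{>l}`: the `S`-submodule of `M` generated by all graded components `M_d` with
`#suppᵃ(d) > l`. -/
noncomputable def skelSubGt (a : Fin n → ℕ) (gr : MGrading k n M) (l : ℕ) : Submodule (PS k n) M :=
  skelSubGe a gr (l + 1)

end Skel

/-- The monomial `x^d`. -/
noncomputable def mono (k : Type) [Field k] {n : ℕ} (d : Fin n → ℕ) : PS k n :=
  monomial (toFs d) (1 : k)

/-- The sliding operation `a ◁ b`. -/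
def slide {n : ℕ} (a b : Fin n → ℕ) : Fin n → ℕ :=
  fun i => if a i = 0 then 0 else a i + b i

/-- The irreducible monomial ideal `𝔪^a = (xᵢ^{aᵢ} : aᵢ > 0)`. -/
noncomputable def irrIdeal (k : Type) [Field k] {n : ℕ} (a : Fin n → ℕ) : Ideal (PS k n) :=
  Ideal.span {p | ∃ i, 0 < a i ∧ p = (X i : PS k n) ^ (a i)}

/-- The degree-`d` piece of the natural monomial grading of `S/I` for a monomial
ideal `I`: spanned by the image of the monomial of degree `d`. -/
noncomputable def quotMonPiece (k : Type) [Field k] {n : ℕ} (I : Ideal (PS k n))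
    (d : Fin n → ℤ) : Submodule k (PS k n ⧸ I) :=
  Submodule.span k {y | ∃ e : Fin n →₀ ℕ, (∀ i, d i = e i) ∧
    y = Ideal.Quotient.mk I (monomial e (1 : k))}

/-- The degree-`d` piece of the natural monomial grading of a monomial ideal `I`
(regarded as an `S`-module): spanned by the monomial of degree `d` if it lies in `I`. -/
noncomputable def idealMonPiece (k : Type) [Field k] {n : ℕ} (I : Ideal (PS k n))
    (d : Fin n → ℤ) : Submodule k ↥I :=
  Submodule.span k {y : ↥I | ∃ e : Fin n →₀ ℕ, (∀ i, d i = e i) ∧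
    (y : PS k n) = monomial e (1 : k)}

section Proof

variable {k : Type} [Field k] {n : ℕ}

lemma toFs_apply (d : Fin n → ℕ) (i : Fin n) : toFs d i = d i := rfl

lemma mem_irrIdeal_iff (d : Fin n → ℕ) (p : PS k n) :
    p ∈ irrIdeal k d ↔ ∀ m ∈ p.support, ∃ l, 0 < d l ∧ d l ≤ m l := by
  have h : irrIdeal k d = Ideal.span ((fun s => monomial s (1 : k)) ''
      {e | ∃ i, 0 < d i ∧ e = Finsupp.single i (d i)}) := by
    unfold irrIdeal
    congr 1
    ext q
    constructor
    · rintro ⟨i, hi, rfl⟩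
      exact ⟨Finsupp.single i (d i), ⟨i, hi, rfl⟩, (X_pow_eq_monomial).symm⟩
    · rintro ⟨e, ⟨i, hi, rfl⟩, rfl⟩
      exact ⟨i, hi, X_pow_eq_monomial.symm⟩
  rw [h, mem_ideal_span_monomial_image]
  constructor
  · intro H m hm
    obtain ⟨si, ⟨i, hi, rfl⟩, hle⟩ := H m hm
    exact ⟨i, hi, Finsupp.single_le_iff.mp hle⟩
  · intro H m hm
    obtain ⟨l, hl, hle⟩ := H m hm
    exact ⟨Finsupp.single l (d l), ⟨l, hl, rfl⟩, Finsupp.single_le_iff.mpr hle⟩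

lemma mem_spanMono_iff {r : ℕ} (A : Fin r → (Fin n → ℕ)) (p : PS k n) :
    p ∈ Ideal.span {p | ∃ i : Fin r, p = mono k (A i)} ↔
      ∀ m ∈ p.support, ∃ i : Fin r, ∀ l, A i l ≤ m l := by
  have h : {p : PS k n | ∃ i : Fin r, p = mono k (A i)} =
      (fun s => monomial s (1 : k)) '' {e | ∃ i : Fin r, e = toFs (A i)} := by
    ext q
    constructor
    · rintro ⟨i, rfl⟩; exact ⟨toFs (A i), ⟨i, rfl⟩, rfl⟩
    · rintro ⟨e, ⟨i, rfl⟩, rfl⟩; exact ⟨i, rfl⟩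
  rw [h, mem_ideal_span_monomial_image]
  constructor
  · intro H m hm
    obtain ⟨si, ⟨i, rfl⟩, hle⟩ := H m hm
    exact ⟨i, fun l => Finsupp.le_def.mp hle l⟩
  · intro H m hm
    obtain ⟨i, hi⟩ := H m hm
    exact ⟨toFs (A i), ⟨i, rfl⟩, Finsupp.le_def.mpr fun l => hi l⟩

lemma support_mono (d : Fin n → ℕ) : (mono k d).support = {toFs d} := by
  classical
  rw [mono, support_monomial, if_neg (one_ne_zero)]

lemma key {r s : ℕ} (A : Fin r → (Fin n → ℕ)) (D : Fin s → (Fin n → ℕ)) (b : Fin n → ℕ)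
    (hd : ∀ e : Fin n → ℕ, (∃ i, ∀ l, A i l ≤ e l) ↔ ∀ j, ∃ l, 0 < D j l ∧ D j l ≤ e l)
    (e : Fin n → ℕ) :
    (∃ i, ∀ l, slide (A i) b l ≤ e l) ↔
      ∀ j, ∃ l, 0 < slide (D j) b l ∧ slide (D j) b l ≤ e l := by
  constructor
  · rintro ⟨i, hi⟩ j
    have h1 : ∃ i, ∀ l, A i l ≤ e l - b l := by
      refine ⟨i, fun l => ?_⟩
      have := hi l
      unfold slide at this
      by_cases h : A i l = 0 <;> simp [h] at this ⊢ <;> omega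
    obtain ⟨l, hl1, hl2⟩ := (hd _).mp h1 j
    have hl2' : D j l ≤ e l - b l := hl2
    have hz : D j l ≠ 0 := by omega
    refine ⟨l, ?_, ?_⟩ <;> unfold slide <;> simp [hz] <;> omega
  · intro h
    have h1 : ∀ j, ∃ l, 0 < D j l ∧ D j l ≤ e l - b l := by
      intro j
      obtain ⟨l, hl1, hl2⟩ := h j
      unfold slide at hl1 hl2
      by_cases hc : D j l = 0
      · simp [hc] at hl1
      · simp [hc] at hl1 hl2
        exact ⟨l, Nat.pos_of_ne_zero hc, by omega⟩
    obtain ⟨i, hi⟩ := (hd _).mpr h1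
    refine ⟨i, fun l => ?_⟩
    have h2 : A i l ≤ e l - b l := hi l
    have h3 : ∀ j, ∃ l, 0 < slide (D j) b l ∧ slide (D j) b l ≤ e l := h
    unfold slide
    by_cases hc : A i l = 0 <;> simp [hc]
    omega

end Proof

theorem stmt15 (k : Type) [Field k] (n : ℕ) (r s : ℕ)
    (A : Fin r → (Fin n → ℕ)) (D : Fin s → (Fin n → ℕ)) (b : Fin n → ℕ)
    (hmin : ∀ j : Fin r,
      mono k (A j) ∉ Ideal.span {p | ∃ i : Fin r, i ≠ j ∧ p = mono k (A i)})
    (hdecomp : Ideal.span {p | ∃ i : Fin r, p = mono k (A i)} =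
      ⨅ i : Fin s, irrIdeal k (D i))
    (hirr : ∀ j : Fin s, (⨅ i : Fin s, ⨅ (_ : i ≠ j), irrIdeal k (D i)) ≠
      ⨅ i : Fin s, irrIdeal k (D i)) :
    Ideal.span {p | ∃ i : Fin r, p = mono k (slide (A i) b)} =
      (⨅ i : Fin s, irrIdeal k (slide (D i) b)) ∧
    ∀ j : Fin s, (⨅ i : Fin s, ⨅ (_ : i ≠ j), irrIdeal k (slide (D i) b)) ≠
      ⨅ i : Fin s, irrIdeal k (slide (D i) b) := by
  classical
  have hmem : ∀ (r' : ℕ) (A' : Fin r' → (Fin n → ℕ)) (e : Fin n → ℕ),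
      (mono k e ∈ Ideal.span {p | ∃ i : Fin r', p = mono k (A' i)}) ↔
        ∃ i, ∀ l, A' i l ≤ e l := by
    intro r' A' e
    rw [mem_spanMono_iff, support_mono]
    simp [toFs_apply]
  have hirrmem : ∀ (d e : Fin n → ℕ),
      mono k e ∈ irrIdeal k d ↔ ∃ l, 0 < d l ∧ d l ≤ e l := by
    intro d e
    rw [mem_irrIdeal_iff, support_mono]
    simp [toFs_apply]
  have hd : ∀ e : Fin n → ℕ,
      (∃ i, ∀ l, A i l ≤ e l) ↔ ∀ j, ∃ l, 0 < D j l ∧ D j l ≤ e l := by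
    intro e
    rw [← hmem r A e, hdecomp, Ideal.mem_iInf]
    exact forall_congr' fun j => hirrmem (D j) e
  have keyb := key A D b hd
  constructor
  · apply le_antisymm
    · rw [Ideal.span_le]
      rintro p ⟨i, rfl⟩
      rw [SetLike.mem_coe, Ideal.mem_iInf]
      intro j
      rw [hirrmem]
      exact (keyb (slide (A i) b)).mp ⟨i, fun l => le_refl _⟩ j
    · intro p hp
      rw [Ideal.mem_iInf] at hp
      rw [mem_spanMono_iff]
      intro m hm
      refine (keyb m).mpr fun j => ?_
      exact (mem_irrIdeal_iff _ p).mp (hp j) m hm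
  · intro j heq
    have hle : (⨅ i, irrIdeal k (D i)) ≤ ⨅ i, ⨅ (_ : i ≠ j), irrIdeal k (D i) :=
      le_iInf fun i => le_iInf fun _ => iInf_le _ i
    have hnle : ¬ (⨅ i, ⨅ (_ : i ≠ j), irrIdeal k (D i)) ≤ ⨅ i, irrIdeal k (D i) :=
      fun h => hirr j (le_antisymm h hle)
    obtain ⟨p, hp1, hp2⟩ := SetLike.not_le_iff_exists.mp hnle
    have hppart : ∀ i, i ≠ j → p ∈ irrIdeal k (D i) := by
      intro i hij
      rw [Ideal.mem_iInf] at hp1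
      have := hp1 i
      rw [Ideal.mem_iInf] at this
      exact this hij
    have hpj : p ∉ irrIdeal k (D j) := by
      intro hc
      apply hp2
      rw [Ideal.mem_iInf]
      intro i
      by_cases hij : i = j
      · subst hij; exact hc
      · exact hppart i hij
    rw [mem_irrIdeal_iff] at hpj
    push_neg at hpj
    obtain ⟨m, hm, hmj⟩ := hpj
    set e' : Fin n → ℕ := fun l => m l + b l with he'
    have hq1 : mono k e' ∈ ⨅ i, ⨅ (_ : i ≠ j), irrIdeal k (slide (D i) b) := by
      rw [Ideal.mem_iInf]
      intro i
      rw [Ideal.mem_iInf]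
      intro hij
      rw [hirrmem]
      obtain ⟨l, hl1, hl2⟩ := (mem_irrIdeal_iff (D i) p).mp (hppart i hij) m hm
      have hz : D i l ≠ 0 := by omega
      refine ⟨l, ?_, ?_⟩ <;> unfold slide <;> simp [hz, he'] <;> omega
    have hq2 : mono k e' ∉ irrIdeal k (slide (D j) b) := by
      rw [hirrmem]
      rintro ⟨l, hl1, hl2⟩
      unfold slide at hl1 hl2
      by_cases hz : D j l = 0
      · simp [hz] at hl1
      · simp [hz, he'] at hl1 hl2
        exact absurd hl2 (by have := hmj l (Nat.pos_of_ne_zero hz); omega)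
    apply hq2
    rw [heq] at hq1
    rw [Ideal.mem_iInf] at hq1
    exact hq1 j
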